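/- For a Type-II quasi-cyclic LDPC code with polynomial parity check matrix H(X) whose entries are zero, monomials, or binomials over F₂[X]/(X^r-1): the code is dual-containing (H·H^T = 0) if and only if every row difference c_i - c_j of the exponent matrix (with the generalized difference rules) is multiplicity even. -/

import Mathlib

/-- For a Type-II QC-LDPC code: each entry of the `J × L` polynomial parity-check matrix
over `𝔽₂[X]/(X^r-1)` is zero, a monomial, or a binomial, recorded as a finset
`E j l ⊆ ZMod r` of exponents with at most 2 elements.  The code is dual-containing
(`H(X)·H(X)ᵀ = 0`) iff every generalized row difference of the exponent matrix is
multiplicity even, i.e. for all rows `i, j` and every value `v`, the number of triples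
`(l, a, b)` with `a ∈ E i l`, `b ∈ E j l`, `a - b = v` is even. -/
theorem stmt_12 (r J L : ℕ) [NeZero r] (E : Fin J → Fin L → Finset (ZMod r))
    (hcard : ∀ j l, (E j l).card ≤ 2) :
    (Matrix.of fun (j : Fin J) (l : Fin L) =>
        Ideal.Quotient.mk (Ideal.span ({Polynomial.X ^ r - 1} : Set (Polynomial (ZMod 2))))
          (∑ k ∈ E j l, Polynomial.X ^ k.val)) *
      (Matrix.of fun (l : Fin L) (j : Fin J) =>
        Ideal.Quotient.mk (Ideal.span ({Polynomial.X ^ r - 1} : Set (Polynomial (ZMod 2))))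
          (∑ k ∈ E j l, Polynomial.X ^ ((-k : ZMod r)).val)) = 0 ↔
    ∀ i j : Fin J, ∀ v : ZMod r,
      Even (∑ l : Fin L,
        ((E i l ×ˢ E j l).filter fun ab => ab.1 - ab.2 = v).card) := by
  classical
  have hr : 0 < r := Nat.pos_of_ne_zero (NeZero.ne r)
  set I : Ideal (Polynomial (ZMod 2)) :=
    Ideal.span ({Polynomial.X ^ r - 1} : Set (Polynomial (ZMod 2))) with hI
  set φ : Polynomial (ZMod 2) →+* _ := Ideal.Quotient.mk I with hφ
  set P : Fin J → Fin J → Polynomial (ZMod 2) := fun i j =>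
    ∑ l : Fin L, ∑ ab ∈ E i l ×ˢ E j l, Polynomial.X ^ ((ab.1 - ab.2 : ZMod r)).val with hP
  have hxr : (φ Polynomial.X) ^ r = 1 := by
    have h0 : φ (Polynomial.X ^ r - 1) = 0 :=
      Ideal.Quotient.eq_zero_iff_mem.mpr (Ideal.subset_span rfl)
    rw [map_sub, map_pow, map_one, sub_eq_zero] at h0
    exact h0
  have hpow : ∀ m : ℕ, (φ Polynomial.X) ^ m = (φ Polynomial.X) ^ (m % r) := by
    intro m
    conv_lhs => rw [← Nat.div_add_mod m r]
    rw [pow_add, pow_mul, hxr, one_pow, one_mul]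
  have key : ∀ a b : ZMod r,
      (φ Polynomial.X) ^ a.val * (φ Polynomial.X) ^ ((-b : ZMod r)).val
        = (φ Polynomial.X) ^ ((a - b : ZMod r)).val := by
    intro a b
    rw [← pow_add, hpow (a.val + (-b : ZMod r).val), sub_eq_add_neg, ZMod.val_add]
  have hentry : ∀ i j : Fin J,
      ((Matrix.of fun (j : Fin J) (l : Fin L) =>
          φ (∑ k ∈ E j l, Polynomial.X ^ k.val)) *
        (Matrix.of fun (l : Fin L) (j : Fin J) =>
          φ (∑ k ∈ E j l, Polynomial.X ^ ((-k : ZMod r)).val))) i j = φ (P i j) := by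
    intro i j
    rw [Matrix.mul_apply, hP]
    simp only [Matrix.of_apply, map_sum, map_pow]
    refine Finset.sum_congr rfl fun l _ => ?_
    rw [Finset.sum_mul_sum, ← Finset.sum_product']
    exact Finset.sum_congr rfl fun ab _ => key ab.1 ab.2
  have hcoeff : ∀ (i j : Fin J) (n : ℕ), (P i j).coeff n =
      ((∑ l : Fin L,
        ((E i l ×ˢ E j l).filter fun ab =>
          ((ab.1 - ab.2 : ZMod r)).val = n).card : ℕ) : ZMod 2) := by
    intro i j n
    rw [hP]
    push_cast
    rw [Polynomial.finset_sum_coeff]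
    refine Finset.sum_congr rfl fun l _ => ?_
    rw [Polynomial.finset_sum_coeff]
    simp only [Polynomial.coeff_X_pow]
    have hswap : ((E i l ×ˢ E j l).filter fun ab => n = ((ab.1 - ab.2 : ZMod r)).val)
        = ((E i l ×ˢ E j l).filter fun ab => ((ab.1 - ab.2 : ZMod r)).val = n) :=
      Finset.filter_congr fun ab _ => eq_comm
    rw [Finset.sum_boole, hswap]
  have hcoeff_hi : ∀ (i j : Fin J) (n : ℕ), r ≤ n → (P i j).coeff n = 0 := by
    intro i j n hn
    rw [hcoeff]
    have h0 : ∀ l : Fin L,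
        ((E i l ×ˢ E j l).filter fun ab => ((ab.1 - ab.2 : ZMod r)).val = n) = ∅ := by
      intro l
      refine Finset.filter_eq_empty_iff.mpr fun ab _ h => ?_
      exact absurd (h ▸ ZMod.val_lt _) (not_lt.mpr hn)
    simp [h0]
  have hdeg : ∀ i j : Fin J, (P i j).degree < (r : ℕ) :=
    fun i j => (Polynomial.degree_lt_iff_coeff_zero _ r).mpr
      (fun m hm => hcoeff_hi i j m hm)
  have hfilter : ∀ (i j : Fin J) (l : Fin L) (v : ZMod r),
      ((E i l ×ˢ E j l).filter fun ab => ((ab.1 - ab.2 : ZMod r)).val = v.val)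
        = ((E i l ×ˢ E j l).filter fun ab => ab.1 - ab.2 = v) := by
    intro i j l v
    refine Finset.filter_congr fun ab _ => ?_
    exact ⟨fun h => ZMod.val_injective r h, fun h => by rw [h]⟩
  have hzero : ∀ i j : Fin J, φ (P i j) = 0 ↔
      ∀ v : ZMod r, Even (∑ l : Fin L,
        ((E i l ×ˢ E j l).filter fun ab => ab.1 - ab.2 = v).card) := by
    intro i j
    rw [hφ, Ideal.Quotient.eq_zero_iff_mem, hI, Ideal.mem_span_singleton]
    constructor
    · intro hdvd v
      have hP0 : P i j = 0 := by
        refine Polynomial.eq_zero_of_dvd_of_degree_lt hdvd ?_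
        rw [show (1 : Polynomial (ZMod 2)) = Polynomial.C 1 by simp,
          Polynomial.degree_X_pow_sub_C hr]
        exact hdeg i j
      have h := hcoeff i j v.val
      rw [hP0, Polynomial.coeff_zero, eq_comm, ZMod.natCast_eq_zero_iff] at h
      rw [even_iff_two_dvd]
      simpa [hfilter i j _ v] using h
    · intro hev
      have hP0 : P i j = 0 := by
        ext n
        rw [Polynomial.coeff_zero]
        rcases lt_or_ge n r with hn | hn
        · have hv : ((n : ZMod r)).val = n := ZMod.val_cast_of_lt hn
          rw [hcoeff, ZMod.natCast_eq_zero_iff]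
          have := (hev (n : ZMod r))
          rw [even_iff_two_dvd] at this
          have heq : ∀ l : Fin L,
              ((E i l ×ˢ E j l).filter fun ab => ((ab.1 - ab.2 : ZMod r)).val = n)
                = ((E i l ×ˢ E j l).filter fun ab => ab.1 - ab.2 = (n : ZMod r)) := by
            intro l
            have heq := hfilter i j l (n : ZMod r)
            rwa [hv] at heq
          simpa [heq] using this
        · exact hcoeff_hi i j n hn
      rw [hP0]
      exact dvd_zero _
  rw [← Matrix.ext_iff]
  simp only [Matrix.zero_apply]
  exact forall₂_congr fun i j => by rw [hentry i j]; exact hzero i j
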